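/- The natural map from GSp_4(O/p^{e}) acting on rank-2 isotropic direct summands of (O/p^e)^4 is transitive, and consequently the coset space GSp_4(O/p^e)/U_0(p^e) is in bijection with the set of such Lagrangian submodules, where U_0(p^e) is the stabilizer of span(e_1, e_2). -/

import Mathlib

open Matrix Sum

namespace GSp4Aux

variable {R : Type*} [CommRing R]

local notation "ii" => (Fin 2 ⊕ Fin 2)

private def Jm (R : Type*) [CommRing R] : Matrix ii ii R := fromBlocks 0 1 (-1) 0

private theorem JJ : Jm R * Jm R = -1 := by
  simp [Jm, Matrix.fromBlocks_multiply, Matrix.fromBlocks_neg, ← Matrix.fromBlocks_one]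

private theorem Bexp (u v : ii → R) :
    u ⬝ᵥ Jm R *ᵥ v =
      (u (inl 0) * v (inr 0) + u (inl 1) * v (inr 1))
        - (u (inr 0) * v (inl 0) + u (inr 1) * v (inl 1)) := by
  simp [Jm, dotProduct, Matrix.mulVec, Fintype.sum_sum_type, Fin.sum_univ_two,
    Matrix.fromBlocks_apply₁₁, Matrix.fromBlocks_apply₁₂, Matrix.fromBlocks_apply₂₁,
    Matrix.fromBlocks_apply₂₂, Matrix.one_apply]
  ring

private theorem Balt (u : ii → R) : u ⬝ᵥ Jm R *ᵥ u = 0 := by rw [Bexp]; ring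

private theorem Bskew (u v : ii → R) : u ⬝ᵥ Jm R *ᵥ v = -(v ⬝ᵥ Jm R *ᵥ u) := by
  rw [Bexp, Bexp]; ring

private theorem Bsubr (u x y : ii → R) (c : R) :
    u ⬝ᵥ Jm R *ᵥ (x - c • y) = u ⬝ᵥ Jm R *ᵥ x - c * (u ⬝ᵥ Jm R *ᵥ y) := by
  rw [Bexp, Bexp, Bexp]; simp [Pi.sub_apply, Pi.smul_apply, smul_eq_mul]; ring

private theorem Bsubl (u x y : ii → R) (c : R) :
    (x - c • y) ⬝ᵥ Jm R *ᵥ u = x ⬝ᵥ Jm R *ᵥ u - c * (y ⬝ᵥ Jm R *ᵥ u) := by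
  rw [Bexp, Bexp, Bexp]; simp [Pi.sub_apply, Pi.smul_apply, smul_eq_mul]; ring

/-- entry of `Aᵀ * J * A` as pairing of columns -/
private theorem colPair (A J : Matrix ii ii R) (a b : ii) :
    (Aᵀ * J * A) a b = (fun i => A i a) ⬝ᵥ J *ᵥ (fun i => A i b) := by
  simp [Matrix.mul_apply, Matrix.mulVec, dotProduct, Finset.mul_sum, Finset.sum_mul,
    Fintype.sum_sum_type, Fin.sum_univ_two]
  ring

private theorem flipJ (A V J : Matrix ii ii R) (c : R) (hVA : V * A = 1)
    (hJ : J * J = -1) (h : A * J * Aᵀ = c • J) : Aᵀ * J * A = c • J := by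
  have h3 : Aᵀ = -J * (V * (c • J)) := by
    have hh : J * Aᵀ = V * (c • J) := by
      calc J * Aᵀ = V * (A * J * Aᵀ) := by
            rw [Matrix.mul_assoc A J, ← Matrix.mul_assoc V, hVA, Matrix.one_mul]
        _ = V * (c • J) := by rw [h]
    calc Aᵀ = -(-1) * Aᵀ := by simp
      _ = -(J * J) * Aᵀ := by rw [hJ]
      _ = -J * (J * Aᵀ) := by noncomm_ring
      _ = -J * (V * (c • J)) := by rw [hh]
  calc Aᵀ * J * A = (-J * (V * (c • J))) * J * A := by rw [h3]
    _ = c • (-(J * (V * (J * (J * A))))) := by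
        simp only [Matrix.smul_mul, Matrix.mul_smul, Matrix.neg_mul, Matrix.mul_neg,
          Matrix.mul_assoc]
    _ = c • (-(J * (V * ((J * J) * A)))) := by rw [Matrix.mul_assoc J J A]
    _ = c • J := by rw [hJ]; simp [← Matrix.mul_assoc, hVA, Matrix.mul_assoc]

private theorem flipJ' (A V : Matrix ii ii R) (c : R) (hAV : A * V = 1)
    (h : Aᵀ * Jm R * A = c • Jm R) : A * Jm R * Aᵀ = c • Jm R := by
  have h2 : Aᵀᵀ * Jm R * Aᵀ = c • Jm R := by
    refine flipJ Aᵀ Vᵀ (Jm R) c ?_ JJ ?_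
    · rw [← Matrix.transpose_mul, hAV, Matrix.transpose_one]
    · rwa [Matrix.transpose_transpose]
  rwa [Matrix.transpose_transpose] at h2

/-- The standard Lagrangian. -/
private def L0def (R : Type*) [CommRing R] : Submodule R (ii → R) :=
  Submodule.span R {Pi.single (Sum.inl 0) 1, Pi.single (Sum.inl 1) 1}

private theorem mem_L0_of (v : ii → R) (h : ∀ i : Fin 2, v (inr i) = 0) : v ∈ L0def R := by
  have hv : v = v (inl 0) • (Pi.single (inl 0) 1 : ii → R)
      + v (inl 1) • (Pi.single (inl 1) 1 : ii → R) := by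
    funext k
    rcases k with j | j <;> fin_cases j <;> simp [Pi.single_apply, h 0, h 1]
  rw [hv]
  exact Submodule.add_mem _
    (Submodule.smul_mem _ _ (Submodule.subset_span (by simp)))
    (Submodule.smul_mem _ _ (Submodule.subset_span (by simp)))

private theorem L0_inr_zero {v : ii → R} (h : v ∈ L0def R) (i : Fin 2) : v (inr i) = 0 := by
  induction h using Submodule.span_induction with
  | mem x hx => rcases hx with rfl | rfl <;> simp [Pi.single_apply]
  | zero => simp
  | add x y _ _ hx hy => simp [hx, hy]
  | smul c x _ hx => simp [hx]

private theorem rangeFin2 {α : Type*} (f : Fin 2 → α) : Set.range f = {f 0, f 1} := by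
  ext x
  constructor
  · rintro ⟨j, rfl⟩; fin_cases j <;> simp
  · rintro (rfl | rfl)
    exacts [⟨0, rfl⟩, ⟨1, rfl⟩]

private theorem L0_eq_span_range :
    L0def R = Submodule.span R (Set.range fun j : Fin 2 => (Pi.single (inl j) 1 : ii → R)) := by
  rw [rangeFin2]; rfl

private theorem li2 : LinearIndependent R (fun j : Fin 2 => (Pi.single (inl j) 1 : ii → R)) := by
  have h := (Pi.basisFun R ii).linearIndependent.comp inl inl_injective
  convert h using 1
  funext j
  simp [Pi.basisFun_apply]

private noncomputable def L0basis (R : Type*) [CommRing R] : Module.Basis (Fin 2) R (L0def R) :=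
  (Module.Basis.span (li2 (R := R))).map (LinearEquiv.ofEq _ _ (L0_eq_span_range (R := R)).symm)

/-- span of the columns indexed by `Fin 2` of the image of the basis -/
private theorem span_range_val_eq (M : Submodule R (ii → R)) (b : Module.Basis (Fin 2) R M) :
    Submodule.span R {(b 0 : ii → R), (b 1 : ii → R)} = M := by
  rw [← rangeFin2 (fun j => (b j : ii → R))]
  have : (Set.range fun j => (b j : ii → R)) = M.subtype '' Set.range b := by
    rw [← Set.range_comp]; rfl
  rw [this, ← Submodule.map_span, Module.Basis.span_eq, Submodule.map_subtype_top]

private theorem mulVec_single_col (A : Matrix ii ii R) (k : ii) :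
    A *ᵥ (Pi.single k 1) = fun i => A i k := by
  rw [Matrix.mulVec_single]
  funext i; simp

/-- image of L0 under mulVecLin is span of the two first columns -/
private theorem map_L0 (A : Matrix ii ii R) :
    (L0def R).map A.mulVecLin
      = Submodule.span R {(fun i => A i (inl 0)), (fun i => A i (inl 1))} := by
  rw [L0def, Submodule.map_span]
  congr 1
  rw [Set.image_insert_eq, Set.image_singleton]
  simp only [Matrix.mulVecLin_apply, mulVec_single_col]

/-- Part 2 core: every Lagrangian is the image of L0 under a symplectic matrix. -/
private theorem exists_symplectic [Nontrivial R] (M : Submodule R (ii → R))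
    (hN : ∃ N, IsCompl M N) (hfree : Module.Free R M) (hrank : Module.finrank R M = 2)
    (hiso : ∀ u ∈ M, ∀ v ∈ M, u ⬝ᵥ Jm R *ᵥ v = 0) :
    ∃ γ : (Matrix ii ii R)ˣ, ((γ : Matrix ii ii R) * Jm R * (γ : Matrix ii ii R)ᵀ = Jm R) ∧
      (L0def R).map (γ : Matrix ii ii R).mulVecLin = M := by
  obtain ⟨N, hcompl⟩ := hN
  -- M is finite
  have hMfin : Module.Finite R M := by
    refine Module.Finite.of_surjective (M.linearProjOfIsCompl N hcompl) (fun y => ?_)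
    exact ⟨(y : ii → R), Submodule.linearProjOfIsCompl_apply_left hcompl y⟩
  -- basis of M indexed by Fin 2
  have hcard : Fintype.card (Module.Free.ChooseBasisIndex R M) = 2 := by
    rw [← Module.finrank_eq_card_chooseBasisIndex, hrank]
  let bM : Module.Basis (Fin 2) R M :=
    (Module.Free.chooseBasis R M).reindex (Fintype.equivFinOfCardEq hcard)
  set vv : Fin 2 → (ii → R) := fun j => (bM j : ii → R) with hvv_def
  have hvvM : ∀ j, vv j ∈ M := fun j => (bM j).2
  -- dual vectors
  have proj := M.linearProjOfIsCompl N hcompl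
  let F : Fin 2 → ((ii → R) →ₗ[R] R) :=
    fun j => (bM.coord j).comp (M.linearProjOfIsCompl N hcompl)
  let w' : Fin 2 → (ii → R) := fun j => (-(Jm R)) *ᵥ (fun k => F j (Pi.single k 1))
  have hw' : ∀ (j : Fin 2) (u : ii → R), u ⬝ᵥ Jm R *ᵥ w' j = F j u := by
    intro j u
    show u ⬝ᵥ Jm R *ᵥ ((-(Jm R)) *ᵥ _) = _
    rw [Matrix.mulVec_mulVec, Matrix.mul_neg, JJ, neg_neg, Matrix.one_mulVec]
    rw [LinearMap.pi_apply_eq_sum_univ (F j) u, dotProduct]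
    refine Finset.sum_congr rfl fun k _ => ?_
    rw [smul_eq_mul]
    congr 2
    funext l
    simp [Pi.single_apply, eq_comm]
  have hvw' : ∀ i j : Fin 2, (vv i) ⬝ᵥ Jm R *ᵥ w' j = if i = j then 1 else 0 := by
    intro i j
    rw [hw']
    show (bM.coord j).comp (M.linearProjOfIsCompl N hcompl) (vv i) = _
    simp only [LinearMap.comp_apply]
    rw [show (vv i : ii → R) = ((bM i : M) : ii → R) from rfl,
      show (M.linearProjOfIsCompl N hcompl) (bM i : ii → R) = bM i from
        Submodule.linearProjOfIsCompl_apply_left hcompl _]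
    rw [Module.Basis.coord_apply, Module.Basis.repr_self_apply]
    try simp [eq_comm]
  -- correct w' to make it isotropic
  set c : R := (w' 1) ⬝ᵥ Jm R *ᵥ (w' 0) with hc
  let w : Fin 2 → (ii → R) := ![w' 0, w' 1 - c • vv 0]
  have hvw : ∀ i j : Fin 2, (vv i) ⬝ᵥ Jm R *ᵥ w j = if i = j then 1 else 0 := by
    intro i j
    fin_cases j
    · exact hvw' i 0
    · show (vv i) ⬝ᵥ Jm R *ᵥ (w' 1 - c • vv 0) = _
      rw [Bsubr, hvw' i 1, hiso _ (hvvM i) _ (hvvM 0)]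
      try simp
  have hww : ∀ i j : Fin 2, (w i) ⬝ᵥ Jm R *ᵥ w j = 0 := by
    have h10 : (w 1) ⬝ᵥ Jm R *ᵥ w 0 = 0 := by
      show (w' 1 - c • vv 0) ⬝ᵥ Jm R *ᵥ (w' 0) = 0
      rw [Bsubl, ← hc, hvw' 0 0]
      try simp
    intro i j
    fin_cases i <;> fin_cases j
    · exact Balt _
    · rw [Bskew]; simpa using h10
    · simpa using h10
    · exact Balt _
  have hwv : ∀ i j : Fin 2, (w i) ⬝ᵥ Jm R *ᵥ vv j = -(if j = i then 1 else 0) := by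
    intro i j
    rw [Bskew, hvw j i]
  -- the symplectic matrix
  set col : ii → (ii → R) := Sum.elim vv w with hcol
  set A : Matrix ii ii R := Matrix.of (fun a b => col b a) with hA
  have hAcol : ∀ b, (fun i => A i b) = col b := fun b => rfl
  have hsymp : Aᵀ * Jm R * A = Jm R := by
    ext a b
    rw [colPair, hAcol, hAcol]
    rcases a with i | i <;> rcases b with j | j
    · rw [show col (inl i) = vv i from rfl, show col (inl j) = vv j from rfl,
        hiso _ (hvvM i) _ (hvvM j)]
      simp [Jm, Matrix.fromBlocks_apply₁₁]
    · rw [show col (inl i) = vv i from rfl, show col (inr j) = w j from rfl, hvw i j]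
      simp [Jm, Matrix.fromBlocks_apply₁₂, Matrix.one_apply]
    · rw [show col (inr i) = w i from rfl, show col (inl j) = vv j from rfl, hwv i j]
      by_cases h : i = j
      · subst h; simp [Jm, Matrix.fromBlocks_apply₂₁, Matrix.one_apply]
      · simp [Jm, Matrix.fromBlocks_apply₂₁, Matrix.one_apply, h, Ne.symm h]
    · rw [show col (inr i) = w i from rfl, show col (inr j) = w j from rfl, hww i j]
      simp [Jm, Matrix.fromBlocks_apply₂₂]
  -- determinant
  have hdetJ : (Jm R).det * (Jm R).det = 1 := by
    have := congrArg Matrix.det (JJ (R := R))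
    rw [Matrix.det_mul, Matrix.det_neg, Matrix.det_one] at this
    rw [this]; norm_num
  have husJ : IsUnit (Jm R).det := IsUnit.of_mul_eq_one _ hdetJ
  have hdetA2 : A.det * A.det = 1 := by
    have h1 := congrArg Matrix.det hsymp
    rw [Matrix.det_mul, Matrix.det_mul, Matrix.det_transpose] at h1
    have h2 : (A.det * A.det) * (Jm R).det = 1 * (Jm R).det := by
      rw [one_mul]; linear_combination h1
    exact husJ.mul_right_cancel h2
  have hdetA : IsUnit A.det := IsUnit.of_mul_eq_one _ hdetA2
  refine ⟨⟨A, A⁻¹, Matrix.mul_nonsing_inv _ hdetA, Matrix.nonsing_inv_mul _ hdetA⟩, ?_, ?_⟩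
  · -- A * J * Aᵀ = J
    have := flipJ' A A⁻¹ (1 : R) (Matrix.mul_nonsing_inv _ hdetA) (by rw [one_smul]; exact hsymp)
    rwa [one_smul] at this
  · -- image
    show (L0def R).map A.mulVecLin = M
    rw [map_L0, hAcol, hAcol]
    rw [show col (inl 0) = vv 0 from rfl, show col (inl 1) = vv 1 from rfl]
    exact span_range_val_eq M bM


/-- N0, the complementary Lagrangian -/
private def N0def (R : Type*) [CommRing R] : Submodule R (ii → R) :=
  Submodule.span R {Pi.single (Sum.inr 0) 1, Pi.single (Sum.inr 1) 1}

private theorem mem_N0_of (v : ii → R) (h : ∀ i : Fin 2, v (inl i) = 0) : v ∈ N0def R := by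
  have hv : v = v (inr 0) • (Pi.single (inr 0) 1 : ii → R)
      + v (inr 1) • (Pi.single (inr 1) 1 : ii → R) := by
    funext k
    rcases k with j | j <;> fin_cases j <;> simp [Pi.single_apply, h 0, h 1]
  rw [hv]
  exact Submodule.add_mem _
    (Submodule.smul_mem _ _ (Submodule.subset_span (by simp)))
    (Submodule.smul_mem _ _ (Submodule.subset_span (by simp)))

private theorem N0_inl_zero {v : ii → R} (h : v ∈ N0def R) (i : Fin 2) : v (inl i) = 0 := by
  induction h using Submodule.span_induction with
  | mem x hx => rcases hx with rfl | rfl <;> simp [Pi.single_apply]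
  | zero => simp
  | add x y _ _ hx hy => simp [hx, hy]
  | smul c x _ hx => simp [hx]

private theorem isCompl_L0_N0 : IsCompl (L0def R) (N0def R) := by
  constructor
  · rw [Submodule.disjoint_def]
    intro x hx1 hx2
    funext k
    rcases k with j | j
    · exact N0_inl_zero hx2 j
    · exact L0_inr_zero hx1 j
  · rw [codisjoint_iff, eq_top_iff]
    intro v _
    have hv : v = (Sum.elim (fun j => v (inl j)) 0 : ii → R)
        + (Sum.elim 0 (fun j => v (inr j)) : ii → R) := by
      funext k; rcases k with j | j <;> simp
    rw [hv]
    exact Submodule.add_mem _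
      (Submodule.mem_sup_left (mem_L0_of _ (by simp)))
      (Submodule.mem_sup_right (mem_N0_of _ (by simp)))

private theorem isCompl_map (e : (ii → R) ≃ₗ[R] (ii → R)) {p q : Submodule R (ii → R)}
    (h : IsCompl p q) :
    IsCompl (p.map (e : (ii → R) →ₗ[R] (ii → R))) (q.map (e : (ii → R) →ₗ[R] (ii → R))) := by
  constructor
  · rw [Submodule.disjoint_def]
    rintro x hx1 hx2
    obtain ⟨u, hu, rfl⟩ := hx1
    obtain ⟨v, hv, heq⟩ := hx2
    have huv : v = u := e.injective heq
    subst huv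
    have : v = 0 := Submodule.disjoint_def.mp h.disjoint v hu hv
    rw [this, map_zero]
  · rw [codisjoint_iff, ← Submodule.map_sup, codisjoint_iff.mp h.codisjoint, Submodule.map_top,
      LinearMap.range_eq_top]
    exact e.surjective

/-- the linear equivalence attached to an invertible matrix -/
private noncomputable def matEquiv (γ : (Matrix ii ii R)ˣ) : (ii → R) ≃ₗ[R] (ii → R) :=
  LinearEquiv.ofLinear (Matrix.mulVecLin (γ : Matrix ii ii R))
    (Matrix.mulVecLin ((γ⁻¹ : (Matrix ii ii R)ˣ) : Matrix ii ii R))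
    (by rw [← Matrix.mulVecLin_mul, γ.mul_inv, Matrix.mulVecLin_one])
    (by rw [← Matrix.mulVecLin_mul, γ.inv_mul, Matrix.mulVecLin_one])

private theorem matEquiv_coe (γ : (Matrix ii ii R)ˣ) :
    (matEquiv γ : (ii → R) →ₗ[R] (ii → R)) = Matrix.mulVecLin (γ : Matrix ii ii R) := rfl

private theorem L0iso {u v : ii → R} (hu : u ∈ L0def R) (hv : v ∈ L0def R) :
    u ⬝ᵥ Jm R *ᵥ v = 0 := by
  rw [Bexp, L0_inr_zero hu 0, L0_inr_zero hu 1, L0_inr_zero hv 0, L0_inr_zero hv 1]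
  ring

private theorem vecMul_smulM (u : ii → R) (c : R) (M : Matrix ii ii R) :
    u ᵥ* (c • M) = c • (u ᵥ* M) := by
  funext i
  show (Matrix.vecMul u (c • M)) i = _
  simp only [Matrix.vecMul, dotProduct, Matrix.smul_apply, Pi.smul_apply, smul_eq_mul,
    Finset.mul_sum]
  exact Finset.sum_congr rfl fun k _ => by ring

/-- Part 1 : the image of L0 under an element of GSp is Lagrangian. -/
private theorem part1 [Nontrivial R] (γ : (Matrix ii ii R)ˣ) (ν : Rˣ)
    (hγ : (γ : Matrix ii ii R) * Jm R * (γ : Matrix ii ii R)ᵀ = (ν : R) • Jm R) :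
    (∃ N, IsCompl ((L0def R).map (Matrix.mulVecLin (γ : Matrix ii ii R))) N) ∧
      Module.Free R ((L0def R).map (Matrix.mulVecLin (γ : Matrix ii ii R))) ∧
      Module.finrank R ((L0def R).map (Matrix.mulVecLin (γ : Matrix ii ii R))) = 2 ∧
      ∀ u ∈ (L0def R).map (Matrix.mulVecLin (γ : Matrix ii ii R)),
        ∀ v ∈ (L0def R).map (Matrix.mulVecLin (γ : Matrix ii ii R)), u ⬝ᵥ Jm R *ᵥ v = 0 := by
  have hmapeq : ∀ p : Submodule R (ii → R),
      p.map ((matEquiv γ : (ii → R) →ₗ[R] (ii → R)))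
        = p.map (Matrix.mulVecLin (γ : Matrix ii ii R)) := by
    intro p; rw [matEquiv_coe]
  refine ⟨⟨(N0def R).map (Matrix.mulVecLin (γ : Matrix ii ii R)), ?_⟩, ?_, ?_, ?_⟩
  · rw [← hmapeq, ← hmapeq]
    exact isCompl_map (matEquiv γ) isCompl_L0_N0
  · rw [← hmapeq]
    exact Module.Free.of_basis ((L0basis R).map ((matEquiv γ).submoduleMap (L0def R)))
  · rw [← hmapeq]
    rw [Module.finrank_eq_card_basis ((L0basis R).map ((matEquiv γ).submoduleMap (L0def R)))]
    simp
  · rintro _ ⟨u, hu, rfl⟩ _ ⟨v, hv, rfl⟩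
    have hflip : (γ : Matrix ii ii R)ᵀ * Jm R * (γ : Matrix ii ii R) = (ν : R) • Jm R :=
      flipJ _ ((γ⁻¹ : (Matrix ii ii R)ˣ) : Matrix ii ii R) _ _ γ.inv_mul JJ hγ
    show ((γ : Matrix ii ii R) *ᵥ u) ⬝ᵥ Jm R *ᵥ ((γ : Matrix ii ii R) *ᵥ v) = 0
    rw [Matrix.mulVec_mulVec, Matrix.dotProduct_mulVec, ← Matrix.vecMul_transpose,
      Matrix.vecMul_vecMul, ← Matrix.mul_assoc, hflip, vecMul_smulM,
      smul_dotProduct, ← Matrix.dotProduct_mulVec, L0iso hu hv, smul_zero]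

/-- Part 3 : coset criterion. -/
private theorem part3 (γ δ : (Matrix ii ii R)ˣ) :
    (L0def R).map (Matrix.mulVecLin (γ : Matrix ii ii R))
        = (L0def R).map (Matrix.mulVecLin (δ : Matrix ii ii R)) ↔
      ∀ i j : Fin 2, ((γ⁻¹ * δ : (Matrix ii ii R)ˣ) : Matrix ii ii R) (inr i) (inl j) = 0 := by
  set σ : Matrix ii ii R := ((γ⁻¹ * δ : (Matrix ii ii R)ˣ) : Matrix ii ii R) with hσ
  have hσ' : σ = ((γ⁻¹ : (Matrix ii ii R)ˣ) : Matrix ii ii R) * (δ : Matrix ii ii R) :=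
    Units.val_mul _ _
  have hmapσ : (L0def R).map (Matrix.mulVecLin σ)
      = ((L0def R).map (Matrix.mulVecLin (δ : Matrix ii ii R))).map
          (Matrix.mulVecLin ((γ⁻¹ : (Matrix ii ii R)ˣ) : Matrix ii ii R)) := by
    rw [hσ', Matrix.mulVecLin_mul, Submodule.map_comp]
  constructor
  · intro h
    have hL : (L0def R).map (Matrix.mulVecLin σ) = L0def R := by
      rw [hmapσ, ← h, ← Submodule.map_comp, ← Matrix.mulVecLin_mul, γ.inv_mul,
        Matrix.mulVecLin_one, Submodule.map_id]
    intro i j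
    have he : (Pi.single (inl j) 1 : ii → R) ∈ L0def R := by
      refine Submodule.subset_span ?_
      fin_cases j <;> simp
    have hmem : σ *ᵥ (Pi.single (inl j) 1 : ii → R) ∈ L0def R := by
      rw [← hL]
      exact ⟨_, he, rfl⟩
    have := L0_inr_zero hmem i
    rwa [mulVec_single_col] at this
  · intro h
    -- block decomposition
    have hblock : σ = fromBlocks σ.toBlocks₁₁ σ.toBlocks₁₂ 0 σ.toBlocks₂₂ := by
      rw [show (0 : Matrix (Fin 2) (Fin 2) R) = σ.toBlocks₂₁ by
        ext i j; exact (h i j).symm]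
      exact (Matrix.fromBlocks_toBlocks σ).symm
    have hdetσ : IsUnit σ.det := (Matrix.isUnit_iff_isUnit_det σ).mp (γ⁻¹ * δ).isUnit
    have hdetA : IsUnit σ.toBlocks₁₁.det := by
      have : IsUnit (σ.toBlocks₁₁.det * σ.toBlocks₂₂.det) := by
        rw [← Matrix.det_fromBlocks_zero₂₁, ← hblock]; exact hdetσ
      exact isUnit_of_mul_isUnit_left this
    have hL : (L0def R).map (Matrix.mulVecLin σ) = L0def R := by
      apply le_antisymm
      · rintro _ ⟨u, hu, rfl⟩
        refine mem_L0_of _ fun i => ?_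
        show (σ *ᵥ u) (inr i) = 0
        simp [Matrix.mulVec, dotProduct, Fintype.sum_sum_type, Fin.sum_univ_two,
          h, L0_inr_zero hu]
      · intro v hv
        set x : Fin 2 → R := fun j => v (inl j) with hx
        refine ⟨Sum.elim (σ.toBlocks₁₁⁻¹ *ᵥ x) 0, mem_L0_of _ (by simp), ?_⟩
        show σ *ᵥ (Sum.elim (σ.toBlocks₁₁⁻¹ *ᵥ x) 0) = v
        nth_rewrite 1 [hblock]
        rw [Matrix.fromBlocks_mulVec]
        have h1 : (Sum.elim (σ.toBlocks₁₁⁻¹ *ᵥ x) 0 : ii → R) ∘ inl = σ.toBlocks₁₁⁻¹ *ᵥ x := rfl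
        have h2 : (Sum.elim (σ.toBlocks₁₁⁻¹ *ᵥ x) 0 : ii → R) ∘ inr = 0 := rfl
        rw [h1, h2]
        funext k
        rcases k with j | j
        · simp only [Sum.elim_inl, Matrix.mulVec_zero, add_zero, Matrix.mulVec_mulVec,
            Matrix.mul_nonsing_inv _ hdetA, Matrix.one_mulVec, hx]
        · simp [L0_inr_zero hv]
    have : (L0def R).map (Matrix.mulVecLin ((γ : Matrix ii ii R)
        * (((γ⁻¹ : (Matrix ii ii R)ˣ) : Matrix ii ii R) * (δ : Matrix ii ii R))))
        = (L0def R).map (Matrix.mulVecLin (γ : Matrix ii ii R)) := by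
      rw [Matrix.mulVecLin_mul, Submodule.map_comp]
      rw [show Matrix.mulVecLin (((γ⁻¹ : (Matrix ii ii R)ˣ) : Matrix ii ii R)
        * (δ : Matrix ii ii R)) = Matrix.mulVecLin σ by rw [← hσ']]
      rw [hL]
    rw [← Matrix.mul_assoc, γ.mul_inv, Matrix.one_mul] at this
    exact this.symm


theorem mainAux (R : Type*) [CommRing R] [Nontrivial R] :
    let ι := Fin 2 ⊕ Fin 2
    let J : Matrix ι ι R := Matrix.fromBlocks 0 1 (-1) 0
    let GSp : Set (GL ι R) :=
      {γ | ∃ ν : Rˣ, (γ : Matrix ι ι R) * J * (γ : Matrix ι ι R)ᵀ = (ν : R) • J}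
    let L0 : Submodule R (ι → R) :=
      Submodule.span R {Pi.single (Sum.inl 0) 1, Pi.single (Sum.inl 1) 1}
    let IsLagrangian : Submodule R (ι → R) → Prop := fun M =>
      (∃ N, IsCompl M N) ∧ Module.Free R M ∧ Module.finrank R M = 2 ∧
        ∀ u ∈ M, ∀ v ∈ M, u ⬝ᵥ J.mulVec v = 0
    (∀ γ ∈ GSp, IsLagrangian (L0.map (Matrix.mulVecLin (γ : Matrix ι ι R)))) ∧
    (∀ M, IsLagrangian M →
      ∃ γ ∈ GSp, L0.map (Matrix.mulVecLin (γ : Matrix ι ι R)) = M) ∧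
    (∀ γ ∈ GSp, ∀ δ ∈ GSp,
      (L0.map (Matrix.mulVecLin (γ : Matrix ι ι R))
          = L0.map (Matrix.mulVecLin (δ : Matrix ι ι R)) ↔
        ∀ i j : Fin 2,
          ((γ⁻¹ * δ : GL ι R) : Matrix ι ι R) (Sum.inr i) (Sum.inl j) = 0)) := by
  intro ι J GSp L0 IsLagrangian
  refine ⟨?_, ?_, ?_⟩
  · rintro γ ⟨ν, hν⟩
    exact part1 γ ν hν
  · rintro M ⟨⟨N, hN⟩, hfree, hrank, hiso⟩
    obtain ⟨γu, hsymp, hmap⟩ := exists_symplectic M ⟨N, hN⟩ hfree hrank hiso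
    exact ⟨γu, ⟨1, by rw [Units.val_one, one_smul]; exact hsymp⟩, hmap⟩
  · intro γ _ δ _
    exact part3 γ δ

end GSp4Aux

/-- Over `R = O/p^e` (`O` a DVR with finite residue field), `GSp₄(R)` acts transitively on
the free rank-2 isotropic direct summands (Lagrangian submodules) of `R⁴`; moreover `GSp₄(R)`
preserves the set of Lagrangians, and two elements of `GSp₄(R)` move the standard Lagrangian
`L₀ = span(e₁,e₂)` to the same Lagrangian iff they lie in the same left coset of the
stabilizer `U₀(p^e)` (lower-left 2×2 block zero).  Consequently the coset space
`GSp₄(R)/U₀(p^e)` is in bijection with the set of Lagrangian submodules. -/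
theorem gsp4_transitive_lagrangians_dvr_quotient (O : Type*) [CommRing O] [IsDomain O]
    [IsDiscreteValuationRing O] [Finite (IsLocalRing.ResidueField O)] (e : ℕ) (he : 1 ≤ e) :
    let R := O ⧸ (IsLocalRing.maximalIdeal O ^ e)
    let ι := Fin 2 ⊕ Fin 2
    let J : Matrix ι ι R := Matrix.fromBlocks 0 1 (-1) 0
    let GSp : Set (GL ι R) :=
      {γ | ∃ ν : Rˣ, (γ : Matrix ι ι R) * J * (γ : Matrix ι ι R)ᵀ = (ν : R) • J}
    let L0 : Submodule R (ι → R) :=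
      Submodule.span R {Pi.single (Sum.inl 0) 1, Pi.single (Sum.inl 1) 1}
    let IsLagrangian : Submodule R (ι → R) → Prop := fun M =>
      (∃ N, IsCompl M N) ∧ Module.Free R M ∧ Module.finrank R M = 2 ∧
        ∀ u ∈ M, ∀ v ∈ M, u ⬝ᵥ J.mulVec v = 0
    (∀ γ ∈ GSp, IsLagrangian (L0.map (Matrix.mulVecLin (γ : Matrix ι ι R)))) ∧
    (∀ M, IsLagrangian M →
      ∃ γ ∈ GSp, L0.map (Matrix.mulVecLin (γ : Matrix ι ι R)) = M) ∧
    (∀ γ ∈ GSp, ∀ δ ∈ GSp,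
      (L0.map (Matrix.mulVecLin (γ : Matrix ι ι R))
          = L0.map (Matrix.mulVecLin (δ : Matrix ι ι R)) ↔
        ∀ i j : Fin 2,
          ((γ⁻¹ * δ : GL ι R) : Matrix ι ι R) (Sum.inr i) (Sum.inl j) = 0)) := by
  have hne : IsLocalRing.maximalIdeal O ^ e ≠ ⊤ := by
    intro htop
    have hle : IsLocalRing.maximalIdeal O ^ e ≤ IsLocalRing.maximalIdeal O :=
      Ideal.pow_le_self (by omega)
    rw [htop] at hle
    exact (IsLocalRing.maximalIdeal.isMaximal O).ne_top (top_le_iff.mp hle)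
  haveI : Nontrivial (O ⧸ (IsLocalRing.maximalIdeal O ^ e)) := Ideal.Quotient.nontrivial_iff.mpr hne
  exact GSp4Aux.mainAux _
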